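/- Let L ⊇ K be number fields. Then there exists a positive integer n such that for all α ∈ O_L, all nonzero ideals I ⊆ O_K, and all k ∈ K: if the product (α-1)(α-2)···(α-n) divides I·O_L (as ideals of O_L) and α ≡ k (mod I), then α ∈ O_K. -/

import Mathlib

open NumberField
open scoped nonZeroDivisors

/-- `DvdNum L I a` means `I` divides the numerator ideal `num(a)` of `a ∈ L`,
where `num(a)` and `den(a)` are the unique coprime ideals with `(a) = num(a)/den(a)`. -/
def DvdNum (L : Type*) [Field L] [NumberField L] (I : Ideal (𝓞 L)) (a : L) : Prop :=
  ∃ N D : Ideal (𝓞 L), N ⊔ D = ⊤ ∧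
    FractionalIdeal.spanSingleton (𝓞 L)⁰ a * (D : FractionalIdeal (𝓞 L)⁰ L) =
      (N : FractionalIdeal (𝓞 L)⁰ L) ∧ I ∣ N


open Finset in
lemma nat_core_bound (d : ℕ) : (60 * d + 80 : ℕ) ≤ 2 ^ (11 * d + 20) := by
  have h1 : 60 * d + 80 ≤ 128 * (d + 1) := by omega
  have h2 : d + 1 ≤ 2 ^ (d + 1) := (d + 1).lt_two_pow_self.le
  have h3 : 128 * (d + 1) ≤ 128 * 2 ^ (d + 1) := Nat.mul_le_mul_left _ h2
  have h4 : (128 : ℕ) * 2 ^ (d + 1) = 2 ^ (d + 8) := by ring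
  have h5 : (2:ℕ) ^ (d + 8) ≤ 2 ^ (11 * d + 20) := Nat.pow_le_pow_right (by norm_num) (by omega)
  omega

open Finset in
lemma core_aux {ι : Type*} [Fintype ι] [Nonempty ι] (u v : ι → ℂ)
    (hv : ∀ i, ∃ i', v i = u i')
    (hs : ∀ j ∈ Icc (1:ℕ) (15 * Fintype.card ι + 20),
      (1:ℝ) ≤ ∏ i, ‖u i - (j : ℂ)‖) :
    ∏ i, ‖v i - u i‖ <
      ∏ j ∈ Icc (1:ℕ) (15 * Fintype.card ι + 20), ∏ i, ‖u i - (j : ℂ)‖ := by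
  classical
  set d := Fintype.card ι with hd
  have hd1 : 1 ≤ d := Fintype.card_pos
  set n := 15 * d + 20 with hn
  have hune : (Finset.univ : Finset ι).Nonempty := univ_nonempty
  set B := Finset.univ.sup' hune (fun i => ‖u i‖) with hBdef
  have hB : ∀ i, ‖u i‖ ≤ B := fun i => Finset.le_sup' (fun i => ‖u i‖) (mem_univ i)
  have hB0 : 0 ≤ B := le_trans (norm_nonneg _) (hB (Classical.arbitrary ι))
  have hvB : ∀ i, ‖v i‖ ≤ B := by
    intro i; obtain ⟨i', hi'⟩ := hv i; rw [hi']; exact hB i'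
  -- upper bound on the t-product
  have hT : ∏ i, ‖v i - u i‖ ≤ (2 * B) ^ d := by
    calc ∏ i, ‖v i - u i‖ ≤ ∏ _i : ι, (2 * B) := by
          refine Finset.prod_le_prod (fun i _ => norm_nonneg _) (fun i _ => ?_)
          calc ‖v i - u i‖ ≤ ‖v i‖ + ‖u i‖ := norm_sub_le _ _
            _ ≤ 2 * B := by linarith [hvB i, hB i]
      _ = (2 * B) ^ d := by rw [Finset.prod_const, Finset.card_univ]
  -- the good set
  set G := (Icc (1:ℕ) n).filter (fun j : ℕ => ∀ i, (2:ℝ) ≤ ‖u i - (j:ℂ)‖) with hG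
  set Bad := (Icc (1:ℕ) n).filter (fun j : ℕ => ¬ ∀ i, (2:ℝ) ≤ ‖u i - (j:ℂ)‖) with hBad
  have hGsub : G ⊆ Icc (1:ℕ) n := filter_subset _ _
  have hbadcard : Bad.card ≤ 4 * d := by
    have hsub : Bad ⊆
        Finset.univ.biUnion (fun i => (Icc (1:ℕ) n).filter (fun j : ℕ => ‖u i - (j:ℂ)‖ < 2)) := by
      intro j hj
      rw [hBad] at hj
      simp only [mem_filter, not_forall, not_le] at hj
      obtain ⟨hj1, i, hi⟩ := hj
      exact Finset.mem_biUnion.2 ⟨i, mem_univ i, mem_filter.2 ⟨hj1, hi⟩⟩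
    refine le_trans (card_le_card hsub) (le_trans card_biUnion_le ?_)
    have hcard4 : ∀ i : ι, ((Icc (1:ℕ) n).filter (fun j : ℕ => ‖u i - (j:ℂ)‖ < 2)).card ≤ 4 := by
      intro i
      set Bd := (Icc (1:ℕ) n).filter (fun j : ℕ => ‖u i - (j:ℂ)‖ < 2) with hBd
      rcases Finset.eq_empty_or_nonempty Bd with he | hne
      · simp [he]
      · have hZsub : Bd ⊆ Icc (Bd.min' hne) (Bd.min' hne + 3) := by
          intro j hj
          have hmin := Bd.min'_mem hne
          have h1 : ‖u i - ((Bd.min' hne : ℕ) : ℂ)‖ < 2 := (mem_filter.1 hmin).2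
          have h2 : ‖u i - (j:ℂ)‖ < 2 := (mem_filter.1 hj).2
          have h3 : ‖((j:ℂ)) - ((Bd.min' hne : ℕ) : ℂ)‖ < 4 := by
            have : ((j:ℂ)) - ((Bd.min' hne : ℕ) : ℂ) =
                (u i - ((Bd.min' hne : ℕ) : ℂ)) - (u i - (j:ℂ)) := by ring
            rw [this]
            calc ‖_ - _‖ ≤ ‖u i - ((Bd.min' hne : ℕ) : ℂ)‖ + ‖u i - (j:ℂ)‖ := norm_sub_le _ _
              _ < 4 := by linarith
          have h4 : |(j:ℝ) - ((Bd.min' hne : ℕ) : ℝ)| < 4 := by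
            have : ((j:ℂ)) - ((Bd.min' hne : ℕ) : ℂ) = (((j:ℝ) - ((Bd.min' hne : ℕ) : ℝ) : ℝ) : ℂ) := by
              push_cast; ring
            rwa [this, Complex.norm_real] at h3
          have h5 : (j:ℝ) < ((Bd.min' hne : ℕ) : ℝ) + 4 := by
            have := abs_lt.1 h4
            linarith [this.2]
          have h6 : j < Bd.min' hne + 4 := by exact_mod_cast h5
          exact mem_Icc.2 ⟨Bd.min'_le j hj, by omega⟩
        calc Bd.card ≤ (Icc (Bd.min' hne) (Bd.min' hne + 3)).card := card_le_card hZsub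
          _ = 4 := by rw [Nat.card_Icc]; omega
    calc ∑ i : ι, ((Icc (1:ℕ) n).filter (fun j : ℕ => ‖u i - (j:ℂ)‖ < 2)).card
        ≤ ∑ _i : ι, 4 := Finset.sum_le_sum (fun i _ => hcard4 i)
      _ = 4 * d := by rw [Finset.sum_const, Finset.card_univ, smul_eq_mul]; omega
  have hGcard : 11 * d + 20 ≤ G.card := by
    have hunion : Icc (1:ℕ) n ⊆ G ∪ Bad := by
      intro j hj
      by_cases hp : ∀ i, (2:ℝ) ≤ ‖u i - (j:ℂ)‖
      · exact Finset.mem_union_left _ (by rw [hG]; exact mem_filter.2 ⟨hj, hp⟩)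
      · exact Finset.mem_union_right _ (by rw [hBad]; exact mem_filter.2 ⟨hj, hp⟩)
    have h1 : (Icc (1:ℕ) n).card ≤ (G ∪ Bad).card := card_le_card hunion
    have h2 : (G ∪ Bad).card ≤ G.card + Bad.card := Finset.card_union_le G Bad
    rw [Nat.card_Icc] at h1
    omega
  -- s_j ≥ 2^d on good j
  have hsG : ∀ j ∈ G, (2:ℝ)^d ≤ ∏ i, ‖u i - (j:ℂ)‖ := by
    intro j hj
    have h2 := (mem_filter.1 hj).2
    calc (2:ℝ)^d = ∏ _i : ι, (2:ℝ) := by rw [Finset.prod_const, Finset.card_univ]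
      _ ≤ ∏ i, ‖u i - (j:ℂ)‖ :=
          Finset.prod_le_prod (fun _ _ => by norm_num) (fun i _ => h2 i)
  have hmono : ∏ j ∈ G, ∏ i, ‖u i - (j:ℂ)‖ ≤ ∏ j ∈ Icc (1:ℕ) n, ∏ i, ‖u i - (j:ℂ)‖ := by
    have h1 : (1:ℝ) ≤ ∏ j ∈ Icc (1:ℕ) n \ G, ∏ i, ‖u i - (j:ℂ)‖ := by
      calc (1:ℝ) = ∏ _j ∈ Icc (1:ℕ) n \ G, (1:ℝ) := by rw [Finset.prod_const_one]
        _ ≤ _ := Finset.prod_le_prod (fun _ _ => zero_le_one)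
            (fun j hj => hs j (Finset.mem_sdiff.1 hj).1)
    calc ∏ j ∈ G, ∏ i, ‖u i - (j:ℂ)‖ = 1 * ∏ j ∈ G, ∏ i, ‖u i - (j:ℂ)‖ := (one_mul _).symm
      _ ≤ (∏ j ∈ Icc (1:ℕ) n \ G, ∏ i, ‖u i - (j:ℂ)‖) * ∏ j ∈ G, ∏ i, ‖u i - (j:ℂ)‖ :=
          mul_le_mul_of_nonneg_right h1
            (Finset.prod_nonneg (fun j _ => Finset.prod_nonneg (fun i _ => norm_nonneg _)))
      _ = ∏ j ∈ Icc (1:ℕ) n, ∏ i, ‖u i - (j:ℂ)‖ := Finset.prod_sdiff hGsub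
  have key : (2 * B) ^ d < ∏ j ∈ G, ∏ i, ‖u i - (j:ℂ)‖ := by
    by_cases hcase : 2 * B < (2:ℝ) ^ (11 * d + 20)
    · calc (2 * B) ^ d < ((2:ℝ) ^ (11 * d + 20)) ^ d :=
            pow_lt_pow_left₀ hcase (by positivity) (by omega)
        _ = ((2:ℝ) ^ d) ^ (11 * d + 20) := by rw [← pow_mul, ← pow_mul, Nat.mul_comm]
        _ ≤ ((2:ℝ) ^ d) ^ G.card :=
            pow_le_pow_right₀ (one_le_pow₀ (by norm_num)) hGcard
        _ = ∏ _j ∈ G, (2:ℝ)^d := by rw [Finset.prod_const]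
        _ ≤ ∏ j ∈ G, ∏ i, ‖u i - (j:ℂ)‖ :=
            Finset.prod_le_prod (fun _ _ => by positivity) hsG
    · push_neg at hcase
      have hnum : ((60 * d + 80 : ℕ) : ℝ) ≤ (2:ℝ) ^ (11 * d + 20) := by
        calc ((60 * d + 80 : ℕ) : ℝ) ≤ ((2 ^ (11 * d + 20) : ℕ) : ℝ) := by
              exact_mod_cast nat_core_bound d
          _ = (2:ℝ) ^ (11 * d + 20) := by push_cast; ring
      have hBn : 2 * (n:ℝ) ≤ B := by
        have : (4:ℝ) * n ≤ 2 * B := by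
          calc (4:ℝ) * n ≤ ((60 * d + 80 : ℕ) : ℝ) := by push_cast [hn]; linarith
            _ ≤ (2:ℝ) ^ (11 * d + 20) := hnum
            _ ≤ 2 * B := hcase
        linarith
      have hB8 : (8:ℝ) ≤ B := by
        have hn4 : (16:ℝ) ≤ (2:ℝ) ^ (11 * d + 20) := by
          calc (16:ℝ) ≤ ((60 * d + 80 : ℕ) : ℝ) := by push_cast; linarith [Nat.cast_nonneg (α := ℝ) d]
            _ ≤ _ := hnum
        linarith [le_trans hn4 hcase]
      obtain ⟨istar, _, histar⟩ := Finset.exists_mem_eq_sup' hune (fun i => ‖u i‖)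
      have hjG : ∀ j ∈ G, B / 2 ≤ ∏ i, ‖u i - (j:ℂ)‖ := by
        intro j hj
        have hjn : (j:ℝ) ≤ n := by
          exact_mod_cast (mem_Icc.1 (hGsub hj)).2
        have h2 := (mem_filter.1 hj).2
        have h1 : B / 2 ≤ ‖u istar - (j:ℂ)‖ := by
          have hns : ‖u istar‖ - ‖(j:ℂ)‖ ≤ ‖u istar - (j:ℂ)‖ := norm_sub_norm_le _ _
          have hjc : ‖(j:ℂ)‖ = (j:ℝ) := by
            rw [Complex.norm_natCast]
          rw [hjc] at hns
          have : B = ‖u istar‖ := histar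
          linarith
        calc B / 2 = ∏ i : ι, (if i = istar then B / 2 else 1) := by
              rw [Finset.prod_ite_eq' Finset.univ istar (fun _ => B / 2)]
              simp
          _ ≤ ∏ i, ‖u i - (j:ℂ)‖ := by
              refine Finset.prod_le_prod (fun i _ => by positivity) (fun i _ => ?_)
              by_cases hi : i = istar
              · simp only [hi, if_pos rfl]; exact h1
              · simp only [if_neg hi]; linarith [h2 i]
      calc (2 * B) ^ d ≤ ((B/2)^2) ^ d := by
            refine pow_le_pow_left₀ (by positivity) ?_ d
            nlinarith
        _ = (B/2) ^ (2 * d) := by rw [← pow_mul, Nat.mul_comm]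
        _ < (B/2) ^ G.card := by
            refine pow_lt_pow_right₀ (by linarith) (by omega)
        _ = ∏ _j ∈ G, (B/2) := by rw [Finset.prod_const]
        _ ≤ ∏ j ∈ G, ∏ i, ‖u i - (j:ℂ)‖ :=
            Finset.prod_le_prod (fun _ _ => by positivity) hjG
  calc ∏ i, ‖v i - u i‖ ≤ (2*B)^d := hT
    _ < ∏ j ∈ G, ∏ i, ‖u i - (j:ℂ)‖ := key
    _ ≤ ∏ j ∈ Icc (1:ℕ) n, ∏ i, ‖u i - (j:ℂ)‖ := hmono

section CoeHelpers

variable {K L : Type*} [Field K] [Field L]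

lemma coe_mapRingHom_apply {F : Type*} [FunLike F K L] [RingHomClass F K L] (f : F)
    (x : 𝓞 K) : algebraMap (𝓞 L) L (RingOfIntegers.mapRingHom f x) = f (algebraMap (𝓞 K) K x) :=
  rfl

lemma coe_algebraMap_rint [Algebra K L] (x : 𝓞 K) :
    algebraMap (𝓞 L) L (algebraMap (𝓞 K) (𝓞 L) x) = algebraMap K L (algebraMap (𝓞 K) K x) :=
  rfl

end CoeHelpers

/-- The key algebraic step: under the divisibility hypotheses of the main theorem,
the element `ι P` divides `σ α - ι α` in `𝓞 M`, for any two K-embeddings `ι σ : L → M`. -/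
lemma divides_conj {K L M : Type*} [Field K] [NumberField K] [Field L] [NumberField L]
    [Field M] [NumberField M] [Algebra K L] [Algebra K M]
    (ι σ : L →ₐ[K] M) (α : 𝓞 L) (I : Ideal (𝓞 K)) (k : K) (P : 𝓞 L)
    (hdvd : Ideal.span {P} ∣ Ideal.map (algebraMap (𝓞 K) (𝓞 L)) I)
    (hnum : DvdNum L (Ideal.map (algebraMap (𝓞 K) (𝓞 L)) I) ((α : L) - algebraMap K L k)) :
    RingOfIntegers.mapRingHom (L := M) ι P ∣
      RingOfIntegers.mapRingHom (L := M) σ α - RingOfIntegers.mapRingHom (L := M) ι α := by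
  obtain ⟨N, D, hND, hprod, hdvdN⟩ := hnum
  set a : L := (α : L) - algebraMap K L k with ha
  set Φι := RingOfIntegers.mapRingHom (K := L) (L := M) ι with hΦι
  set Φσ := RingOfIntegers.mapRingHom (K := L) (L := M) σ with hΦσ
  set φKL := algebraMap (𝓞 K) (𝓞 L) with hφKL
  set φKM := algebraMap (𝓞 K) (𝓞 M) with hφKM
  have hcompι : Φι.comp φKL = φKM := by
    ext x
    show ι (algebraMap K L (algebraMap (𝓞 K) K x)) = algebraMap K M (algebraMap (𝓞 K) K x)
    exact ι.commutes _
  have hcompσ : Φσ.comp φKL = φKM := by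
    ext x
    show σ (algebraMap K L (algebraMap (𝓞 K) K x)) = algebraMap K M (algebraMap (𝓞 K) K x)
    exact σ.commutes _
  set JL := Ideal.map φKL I with hJL
  set JM := Ideal.map φKM I with hJM
  have hmapι : Ideal.map Φι JL = JM := by rw [hJL, Ideal.map_map, hcompι]
  have hmapσ : Ideal.map Φσ JL = JM := by rw [hJL, Ideal.map_map, hcompσ]
  have hNle : N ≤ JL := Ideal.le_of_dvd hdvdN
  have hNι : Ideal.map Φι N ≤ JM := hmapι ▸ Ideal.map_mono hNle
  have hNσ : Ideal.map Φσ N ≤ JM := hmapσ ▸ Ideal.map_mono hNle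
  have E1 : ∀ d ∈ D, ∃ y ∈ N,
      algebraMap (𝓞 L) L y = a * algebraMap (𝓞 L) L d := by
    intro d hd
    have hmem : a * algebraMap (𝓞 L) L d ∈
        FractionalIdeal.spanSingleton (𝓞 L)⁰ a * (D : FractionalIdeal (𝓞 L)⁰ L) := by
      refine FractionalIdeal.mul_mem_mul ?_ ?_
      · exact (FractionalIdeal.mem_spanSingleton _).2 ⟨1, one_smul _ _⟩
      · exact (FractionalIdeal.mem_coeIdeal _).2 ⟨d, hd, rfl⟩
    rw [hprod] at hmem
    exact (FractionalIdeal.mem_coeIdeal _).1 hmem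
  -- main multiplication lemma, for each embedding
  have W : ∀ (τ : L →ₐ[K] M), ∀ x ∈ Ideal.map (RingOfIntegers.mapRingHom (K := L) (L := M) τ) D,
      ∃ m ∈ Ideal.map (RingOfIntegers.mapRingHom (K := L) (L := M) τ) N,
        algebraMap (𝓞 M) M m = τ a * algebraMap (𝓞 M) M x := by
    intro τ x hx
    have hx' : x ∈ Ideal.span ((RingOfIntegers.mapRingHom (K := L) (L := M) τ) ''
        (D : Set (𝓞 L))) := hx
    clear hx
    induction hx' using Submodule.span_induction with
    | mem z hz =>
        obtain ⟨d, hd, rfl⟩ := hz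
        obtain ⟨y, hy, hy2⟩ := E1 d hd
        refine ⟨RingOfIntegers.mapRingHom (L := M) τ y, Ideal.mem_map_of_mem _ hy, ?_⟩
        rw [coe_mapRingHom_apply, coe_mapRingHom_apply, hy2, map_mul]
    | zero => exact ⟨0, zero_mem _, by simp⟩
    | add x y hx hy ihx ihy =>
        obtain ⟨m1, hm1, e1⟩ := ihx
        obtain ⟨m2, hm2, e2⟩ := ihy
        exact ⟨m1 + m2, add_mem hm1 hm2, by rw [map_add, map_add, e1, e2]; ring⟩
    | smul c x hx ih =>
        obtain ⟨m, hm, e⟩ := ih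
        refine ⟨c * m, Ideal.mul_mem_left _ _ hm, ?_⟩
        rw [smul_eq_mul, map_mul, map_mul, e]
        ring
  set tO := Φσ α - Φι α with htO
  have htcoe : algebraMap (𝓞 M) M tO = σ a - ι a := by
    rw [htO, map_sub, coe_mapRingHom_apply, coe_mapRingHom_apply, ha, map_sub, map_sub,
      AlgHom.commutes, AlgHom.commutes]
    ring
  have key : Ideal.span {tO} * (Ideal.map Φι D * Ideal.map Φσ D) ≤ JM := by
    rw [Ideal.mul_le]
    intro r hr z hz
    obtain ⟨c, hc⟩ := Ideal.mem_span_singleton'.1 hr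
    have hz' : tO * z ∈ JM := by
      refine Submodule.mul_induction_on hz ?_ ?_
      · intro x hx y hy
        obtain ⟨m1, hm1, e1⟩ := W ι x hx
        obtain ⟨m2, hm2, e2⟩ := W σ y hy
        have heq : tO * (x * y) = m2 * x - m1 * y := by
          have heq2 : algebraMap (𝓞 M) M (tO * (x * y)) =
              algebraMap (𝓞 M) M (m2 * x - m1 * y) := by
            rw [map_mul (algebraMap (𝓞 M) M) tO (x * y), map_mul (algebraMap (𝓞 M) M) x y,
              map_sub (algebraMap (𝓞 M) M) (m2 * x) (m1 * y),
              map_mul (algebraMap (𝓞 M) M) m2 x, map_mul (algebraMap (𝓞 M) M) m1 y,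
              htcoe, e1, e2]
            ring
          exact RingOfIntegers.ext heq2
        rw [heq]
        exact sub_mem (Ideal.mul_mem_right _ _ (hNσ hm2)) (Ideal.mul_mem_right _ _ (hNι hm1))
      · intro u v hu hv
        have : tO * (u + v) = tO * u + tO * v := by ring
        rw [this]
        exact add_mem hu hv
    rw [← hc, mul_assoc]
    exact Ideal.mul_mem_left _ _ hz'
  have hsupι : JM ⊔ Ideal.map Φι D = ⊤ := by
    rw [eq_top_iff]
    calc (⊤ : Ideal (𝓞 M)) = Ideal.map Φι ⊤ := (Ideal.map_top Φι).symm
      _ = Ideal.map Φι (N ⊔ D) := by rw [hND]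
      _ = Ideal.map Φι N ⊔ Ideal.map Φι D := Ideal.map_sup _ _ _
      _ ≤ JM ⊔ Ideal.map Φι D := sup_le_sup_right hNι _
  have hsupσ : JM ⊔ Ideal.map Φσ D = ⊤ := by
    rw [eq_top_iff]
    calc (⊤ : Ideal (𝓞 M)) = Ideal.map Φσ ⊤ := (Ideal.map_top Φσ).symm
      _ = Ideal.map Φσ (N ⊔ D) := by rw [hND]
      _ = Ideal.map Φσ N ⊔ Ideal.map Φσ D := Ideal.map_sup _ _ _
      _ ≤ JM ⊔ Ideal.map Φσ D := sup_le_sup_right hNσ _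
  have hcop : IsCoprime JM (Ideal.map Φι D * Ideal.map Φσ D) :=
    ((Ideal.isCoprime_iff_sup_eq).2 hsupι).mul_right ((Ideal.isCoprime_iff_sup_eq).2 hsupσ)
  have h1 : JM ∣ Ideal.span {tO} * (Ideal.map Φι D * Ideal.map Φσ D) :=
    Ideal.dvd_iff_le.2 key
  have h2 : JM ∣ Ideal.span {tO} := hcop.dvd_of_dvd_mul_right h1
  have h3 : Ideal.span {Φι P} ∣ JM := by
    rw [Ideal.dvd_iff_le, ← hmapι]
    calc Ideal.map Φι JL ≤ Ideal.map Φι (Ideal.span {P}) :=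
          Ideal.map_mono (Ideal.le_of_dvd hdvd)
      _ = Ideal.span {Φι P} := by rw [Ideal.map_span, Set.image_singleton]
  have h4 : Ideal.span {tO} ≤ Ideal.span {Φι P} := Ideal.le_of_dvd (dvd_trans h3 h2)
  exact Ideal.span_singleton_le_span_singleton.1 h4

lemma norm_prod_embeddings_ge_one {M : Type*} [Field M] [NumberField M]
    (y : 𝓞 M) (hy : y ≠ 0) : (1:ℝ) ≤ ∏ φ : M →ₐ[ℚ] ℂ, ‖φ (algebraMap (𝓞 M) M y)‖ := by
  have h1 : algebraMap ℚ ℂ (Algebra.norm ℚ (algebraMap (𝓞 M) M y)) =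
      ∏ φ : M →ₐ[ℚ] ℂ, φ (algebraMap (𝓞 M) M y) :=
    Algebra.norm_eq_prod_embeddings ℚ ℂ _
  have h2 : ∏ φ : M →ₐ[ℚ] ℂ, ‖φ (algebraMap (𝓞 M) M y)‖ =
      ‖algebraMap ℚ ℂ (Algebra.norm ℚ (algebraMap (𝓞 M) M y))‖ := by
    rw [h1, norm_prod]
  have h3 : Algebra.norm ℚ (algebraMap (𝓞 M) M y) = ((Algebra.norm ℤ y : ℤ) : ℚ) :=
    (Algebra.coe_norm_int y).symm
  have h4 : Algebra.norm ℤ y ≠ 0 := by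
    intro h0
    have h5 : Algebra.norm ℚ (algebraMap (𝓞 M) M y) = 0 := by
      rw [h3, h0]; norm_num
    have h6 : algebraMap (𝓞 M) M y = 0 := Algebra.norm_eq_zero_iff.1 h5
    exact hy (RingOfIntegers.coe_eq_zero_iff.1 h6)
  rw [h2, h3]
  have h7 : algebraMap ℚ ℂ (((Algebra.norm ℤ y : ℤ) : ℚ)) = (((Algebra.norm ℤ y : ℤ) : ℚ) : ℂ) :=
    map_ratCast _ _
  rw [h7]
  have h8 : ‖(((Algebra.norm ℤ y : ℤ) : ℚ) : ℂ)‖ = |((Algebra.norm ℤ y : ℤ) : ℝ)| := by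
    rw [Complex.norm_ratCast]
    push_cast
    rfl
  rw [h8]
  have h9 : (1:ℤ) ≤ |Algebra.norm ℤ y| := Int.one_le_abs h4
  calc (1:ℝ) = ((1:ℤ):ℝ) := by norm_num
    _ ≤ ((|Algebra.norm ℤ y| : ℤ) : ℝ) := by exact_mod_cast h9
    _ = |((Algebra.norm ℤ y : ℤ) : ℝ)| := by push_cast; rfl

lemma finish_aux {M : Type*} [Field M] [NumberField M] (β γ : 𝓞 M)
    (hconj : ∀ φ : M →ₐ[ℚ] ℂ, ∃ φ' : M →ₐ[ℚ] ℂ,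
      φ (algebraMap (𝓞 M) M γ) = φ' (algebraMap (𝓞 M) M β))
    (hne : γ ≠ β)
    (hP : (∏ j ∈ Finset.Icc (1:ℕ) (15 * Fintype.card (M →ₐ[ℚ] ℂ) + 20),
        (β - (j : 𝓞 M))) ∣ (γ - β))
    (hjne : ∀ j ∈ Finset.Icc (1:ℕ) (15 * Fintype.card (M →ₐ[ℚ] ℂ) + 20), β ≠ (j : 𝓞 M)) :
    False := by
  classical
  haveI hne' : Nonempty (M →ₐ[ℚ] ℂ) := by
    rw [← Fintype.card_pos_iff, AlgHom.card]
    exact Module.finrank_pos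
  set n := 15 * Fintype.card (M →ₐ[ℚ] ℂ) + 20 with hn
  set u : (M →ₐ[ℚ] ℂ) → ℂ := fun φ => φ (algebraMap (𝓞 M) M β) with hu
  set v : (M →ₐ[ℚ] ℂ) → ℂ := fun φ => φ (algebraMap (𝓞 M) M γ) with hv
  have hphi : ∀ (φ : M →ₐ[ℚ] ℂ) (j : ℕ),
      φ (algebraMap (𝓞 M) M (β - (j : 𝓞 M))) = u φ - (j : ℂ) := by
    intro φ j
    rw [map_sub (algebraMap (𝓞 M) M) β ((j : 𝓞 M)), map_natCast (algebraMap (𝓞 M) M) j,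
      map_sub φ, map_natCast φ]
  have hs : ∀ j ∈ Finset.Icc (1:ℕ) n, (1:ℝ) ≤ ∏ φ : M →ₐ[ℚ] ℂ, ‖u φ - (j:ℂ)‖ := by
    intro j hj
    have hβj : β - (j : 𝓞 M) ≠ 0 := sub_ne_zero.2 (hjne j hj)
    refine le_trans (norm_prod_embeddings_ge_one (β - (j : 𝓞 M)) hβj)
      (le_of_eq (Finset.prod_congr rfl (fun φ _ => ?_)))
    rw [hphi φ j]
  obtain ⟨w, hw⟩ := hP
  have hw0 : w ≠ 0 := by
    intro h0
    rw [h0, mul_zero] at hw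
    exact hne (sub_eq_zero.1 hw)
  have hprodP : ∀ φ : M →ₐ[ℚ] ℂ,
      ‖φ (algebraMap (𝓞 M) M (∏ j ∈ Finset.Icc (1:ℕ) n, (β - (j : 𝓞 M))))‖ =
        ∏ j ∈ Finset.Icc (1:ℕ) n, ‖u φ - (j:ℂ)‖ := by
    intro φ
    rw [map_prod (algebraMap (𝓞 M) M), map_prod φ, norm_prod]
    exact Finset.prod_congr rfl (fun j _ => by rw [hphi φ j])
  have hPn : ∏ φ : M →ₐ[ℚ] ℂ, ‖v φ - u φ‖ =
      (∏ j ∈ Finset.Icc (1:ℕ) n, ∏ φ : M →ₐ[ℚ] ℂ, ‖u φ - (j:ℂ)‖) * ∏ φ : M →ₐ[ℚ] ℂ, ‖φ (algebraMap (𝓞 M) M w)‖ := by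
    calc ∏ φ : M →ₐ[ℚ] ℂ, ‖v φ - u φ‖ = ∏ φ : M →ₐ[ℚ] ℂ, ‖φ (algebraMap (𝓞 M) M (γ - β))‖ := by
          refine Finset.prod_congr rfl (fun φ _ => ?_)
          rw [map_sub (algebraMap (𝓞 M) M) γ β, map_sub φ]
      _ = ∏ φ : M →ₐ[ℚ] ℂ, (‖φ (algebraMap (𝓞 M) M (∏ j ∈ Finset.Icc (1:ℕ) n, (β - (j : 𝓞 M))))‖ *
            ‖φ (algebraMap (𝓞 M) M w)‖) := by
          refine Finset.prod_congr rfl (fun φ _ => ?_)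
          rw [hw, map_mul (algebraMap (𝓞 M) M), map_mul φ, norm_mul]
      _ = (∏ φ : M →ₐ[ℚ] ℂ, ‖φ (algebraMap (𝓞 M) M (∏ j ∈ Finset.Icc (1:ℕ) n, (β - (j : 𝓞 M))))‖) *
            ∏ φ : M →ₐ[ℚ] ℂ, ‖φ (algebraMap (𝓞 M) M w)‖ := Finset.prod_mul_distrib
      _ = (∏ φ : M →ₐ[ℚ] ℂ, ∏ j ∈ Finset.Icc (1:ℕ) n, ‖u φ - (j:ℂ)‖) *
            ∏ φ : M →ₐ[ℚ] ℂ, ‖φ (algebraMap (𝓞 M) M w)‖ := by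
          rw [Finset.prod_congr rfl (fun φ _ => hprodP φ)]
      _ = (∏ j ∈ Finset.Icc (1:ℕ) n, ∏ φ : M →ₐ[ℚ] ℂ, ‖u φ - (j:ℂ)‖) *
            ∏ φ : M →ₐ[ℚ] ℂ, ‖φ (algebraMap (𝓞 M) M w)‖ := by rw [Finset.prod_comm]
  have hub : ∏ j ∈ Finset.Icc (1:ℕ) n, ∏ φ : M →ₐ[ℚ] ℂ, ‖u φ - (j:ℂ)‖ ≤ ∏ φ : M →ₐ[ℚ] ℂ, ‖v φ - u φ‖ := by
    rw [hPn]
    have h1 : (1:ℝ) ≤ ∏ φ : M →ₐ[ℚ] ℂ, ‖φ (algebraMap (𝓞 M) M w)‖ := norm_prod_embeddings_ge_one w hw0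
    have h0 : (0:ℝ) ≤ ∏ j ∈ Finset.Icc (1:ℕ) n, ∏ φ : M →ₐ[ℚ] ℂ, ‖u φ - (j:ℂ)‖ :=
      Finset.prod_nonneg (fun j _ => Finset.prod_nonneg (fun φ _ => norm_nonneg _))
    nlinarith
  have hlt : ∏ φ : M →ₐ[ℚ] ℂ, ‖v φ - u φ‖ < ∏ j ∈ Finset.Icc (1:ℕ) n, ∏ φ : M →ₐ[ℚ] ℂ, ‖u φ - (j:ℂ)‖ :=
    core_aux u v (fun φ => hconj φ) hs
  exact absurd (lt_of_lt_of_le hlt hub) (lt_irrefl _)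

lemma main_aux (K L : Type*) [Field K] [NumberField K] [Field L] [NumberField L]
    [Algebra K L] (M : Type*) [Field M] [NumberField M] [Algebra K M]
    (ι : L →ₐ[K] M)
    (hM : ∀ x : M, (∀ g : M ≃ₐ[K] M, g x = x) → ∃ y : K, algebraMap K M y = x) :
    ∃ n : ℕ, 1 ≤ n ∧
      ∀ (α : 𝓞 L) (I : Ideal (𝓞 K)), I ≠ ⊥ → ∀ k : K,
        Ideal.span {∏ j ∈ Finset.Icc 1 n, (α - (j : 𝓞 L))} ∣
            Ideal.map (algebraMap (𝓞 K) (𝓞 L)) I →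
          DvdNum L (Ideal.map (algebraMap (𝓞 K) (𝓞 L)) I) ((α : L) - algebraMap K L k) →
          ∃ x : 𝓞 K, algebraMap (𝓞 K) (𝓞 L) x = α := by
  classical
  refine ⟨15 * Fintype.card (M →ₐ[ℚ] ℂ) + 20, by omega, ?_⟩
  intro α I hI k hdvd hnum
  set n := 15 * Fintype.card (M →ₐ[ℚ] ℂ) + 20 with hn
  set P : 𝓞 L := ∏ j ∈ Finset.Icc 1 n, (α - (j : 𝓞 L)) with hP
  have hinj : Function.Injective (algebraMap (𝓞 K) (𝓞 L)) := by
    intro x y h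
    apply RingOfIntegers.ext
    apply (algebraMap K L).injective
    have h2 := congrArg (algebraMap (𝓞 L) L) h
    rwa [coe_algebraMap_rint, coe_algebraMap_rint] at h2
  have hJLne : Ideal.map (algebraMap (𝓞 K) (𝓞 L)) I ≠ ⊥ := by
    intro h0
    exact hI ((Ideal.map_eq_bot_iff_of_injective hinj).1 h0)
  have hPne : P ≠ 0 := by
    intro h0
    apply hJLne
    have hb : Ideal.span ({P} : Set (𝓞 L)) = ⊥ := Ideal.span_singleton_eq_bot.2 h0
    rw [hb] at hdvd
    obtain ⟨c, hc⟩ := hdvd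
    rw [hc]
    simp
  have hjneL : ∀ j ∈ Finset.Icc (1:ℕ) n, α ≠ (j : 𝓞 L) := by
    intro j hj he
    apply hPne
    rw [hP]
    exact Finset.prod_eq_zero hj (by rw [he, sub_self])
  have hfix : ∀ g : M ≃ₐ[K] M, g (ι (algebraMap (𝓞 L) L α)) = ι (algebraMap (𝓞 L) L α) := by
    intro g
    by_contra hg
    set σ : L →ₐ[K] M := (g.toAlgHom).comp ι with hσ
    have hdc := divides_conj ι σ α I k P hdvd hnum
    set β := RingOfIntegers.mapRingHom (L := M) ι α with hβ
    set γ := RingOfIntegers.mapRingHom (L := M) σ α with hγ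
    have hβco : algebraMap (𝓞 M) M β = ι (algebraMap (𝓞 L) L α) := rfl
    have hγco : algebraMap (𝓞 M) M γ = g (ι (algebraMap (𝓞 L) L α)) := rfl
    have hneq : γ ≠ β := by
      intro h
      apply hg
      rw [← hγco, ← hβco, h]
    haveI : IsScalarTower ℚ K M := IsScalarTower.of_algebraMap_eq' (Subsingleton.elim _ _)
    have hconj : ∀ φ : M →ₐ[ℚ] ℂ, ∃ φ' : M →ₐ[ℚ] ℂ,
        φ (algebraMap (𝓞 M) M γ) = φ' (algebraMap (𝓞 M) M β) := by
      intro φ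
      refine ⟨φ.comp ((g.toAlgHom).restrictScalars ℚ), ?_⟩
      rw [hγco, hβco]
      rfl
    have hPmap : RingOfIntegers.mapRingHom (L := M) ι P = ∏ j ∈ Finset.Icc (1:ℕ) n, (β - (j : 𝓞 M)) := by
      rw [hP, map_prod]
      refine Finset.prod_congr rfl (fun j _ => ?_)
      rw [map_sub, map_natCast]
    have hdvdM : (∏ j ∈ Finset.Icc (1:ℕ) n, (β - (j : 𝓞 M))) ∣ (γ - β) := hPmap ▸ hdc
    have hjneM : ∀ j ∈ Finset.Icc (1:ℕ) n, β ≠ (j : 𝓞 M) := by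
      intro j hj he
      apply hjneL j hj
      apply RingOfIntegers.ext
      have h2 : ι (algebraMap (𝓞 L) L α) = ι ((j : L)) := by
        rw [map_natCast ι]
        have h3 := congrArg (algebraMap (𝓞 M) M) he
        rwa [hβco, map_natCast (algebraMap (𝓞 M) M)] at h3
      have h4 := ι.toRingHom.injective h2
      exact h4.trans (map_natCast (algebraMap (𝓞 L) L) j).symm
    exact finish_aux β γ hconj hneq hdvdM hjneM
  obtain ⟨y, hy⟩ := hM _ hfix
  have hKL : algebraMap K L y = algebraMap (𝓞 L) L α := by
    apply ι.toRingHom.injective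
    show ι (algebraMap K L y) = ι (algebraMap (𝓞 L) L α)
    rw [ι.commutes, hy]
  have hyint : IsIntegral ℤ y := by
    have hint : IsIntegral ℤ (algebraMap (𝓞 L) L α) := RingOfIntegers.isIntegral_coe α
    rw [← hKL] at hint
    exact (isIntegral_algebraMap_iff (algebraMap K L).injective).1 hint
  refine ⟨⟨y, (mem_integralClosure_iff (R := ℤ) (A := K)).mpr hyint⟩, RingOfIntegers.ext ?_⟩
  show algebraMap (𝓞 L) L ((algebraMap (𝓞 K) (𝓞 L)) (⟨y, (mem_integralClosure_iff (R := ℤ) (A := K)).mpr hyint⟩ : 𝓞 K)) = algebraMap (𝓞 L) L α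
  refine (coe_algebraMap_rint _).trans ?_
  exact hKL

theorem stmt_4 (K L : Type*) [Field K] [NumberField K] [Field L] [NumberField L]
    [Algebra K L] :
    ∃ n : ℕ, 1 ≤ n ∧
      ∀ (α : 𝓞 L) (I : Ideal (𝓞 K)), I ≠ ⊥ → ∀ k : K,
        Ideal.span {∏ j ∈ Finset.Icc 1 n, (α - (j : 𝓞 L))} ∣
            Ideal.map (algebraMap (𝓞 K) (𝓞 L)) I →
          DvdNum L (Ideal.map (algebraMap (𝓞 K) (𝓞 L)) I) ((α : L) - algebraMap K L k) →
          ∃ x : 𝓞 K, algebraMap (𝓞 K) (𝓞 L) x = α := by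
  classical
  haveI h1 : Algebra.IsAlgebraic K L := Algebra.IsAlgebraic.of_finite K L
  haveI h2 : Algebra.IsAlgebraic K (AlgebraicClosure L) := Algebra.IsAlgebraic.trans K L (AlgebraicClosure L)
  haveI h3 : IsAlgClosure K (AlgebraicClosure L) := ⟨inferInstance, h2⟩
  haveI h4 : Algebra.IsIntegral K (AlgebraicClosure L) := Algebra.IsAlgebraic.isIntegral
  haveI h5 : IsGalois K (AlgebraicClosure L) := ⟨⟩
  haveI h6 : NumberField (IntermediateField.normalClosure K L (AlgebraicClosure L)) :=
    NumberField.of_module_finite K _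
  haveI h7 : IsGalois K (IntermediateField.normalClosure K L (AlgebraicClosure L)) := inferInstance
  refine main_aux K L (IntermediateField.normalClosure K L (AlgebraicClosure L))
    ((normalClosure.algHomEquiv K L (AlgebraicClosure L)).symm (IsScalarTower.toAlgHom K L (AlgebraicClosure L))) ?_
  intro x hx
  have hbot : x ∈ (⊥ : IntermediateField K (IntermediateField.normalClosure K L (AlgebraicClosure L))) := by
    rw [← IsGalois.fixedField_fixingSubgroup
      (⊥ : IntermediateField K (IntermediateField.normalClosure K L (AlgebraicClosure L)))]
    exact fun g => hx g.1
  exact IntermediateField.mem_bot.1 hbot
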